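/- arXiv:1307.6426 — 4 statements merged into one kernel-verified Lean document; each statement's English description precedes it below -/
import Mathlib

section
/- The KKT ideal is the elimination of the variables s from the gradient ideal: I_KKT = I_grad ∩ ℝ[x, u, v], i.e. the ideal of ℝ[x,u,v] generated by F_1,…,F_n, g_1^0,…,g_{n1}^0, v_1 g_1^+,…,v_{n2} g_{n2}^+ equals the preimage of I_grad under the natural inclusion ℝ[x,u,v] → ℝ[x,u,v,s]. -/
open MvPolynomial

noncomputable section

/-- Variables z = (x, u, v, s). -/
abbrev VarsZ (n n1 n2 : ℕ) := Fin n ⊕ (Fin n1 ⊕ (Fin n2 ⊕ Fin n2))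
/-- Variables y = (x, u, v). -/
abbrev VarsY (n n1 n2 : ℕ) := Fin n ⊕ (Fin n1 ⊕ Fin n2)

variable {n n1 n2 : ℕ}

/-- F_k = ∂f/∂x_k − Σ u_i ∂g_i^0/∂x_k − Σ v_j ∂g_j^+/∂x_k, as a polynomial in y = (x,u,v). -/
def Fy (f : MvPolynomial (Fin n) ℝ) (g0 : Fin n1 → MvPolynomial (Fin n) ℝ)
    (gp : Fin n2 → MvPolynomial (Fin n) ℝ) (k : Fin n) : MvPolynomial (VarsY n n1 n2) ℝ :=
  rename Sum.inl (pderiv k f)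
    - ∑ i, X (Sum.inr (Sum.inl i)) * rename Sum.inl (pderiv k (g0 i))
    - ∑ j, X (Sum.inr (Sum.inr j)) * rename Sum.inl (pderiv k (gp j))

/-- The KKT ideal I_KKT ⊆ ℝ[x,u,v]. -/
def IKKT (f : MvPolynomial (Fin n) ℝ) (g0 : Fin n1 → MvPolynomial (Fin n) ℝ)
    (gp : Fin n2 → MvPolynomial (Fin n) ℝ) : Ideal (MvPolynomial (VarsY n n1 n2) ℝ) :=
  Ideal.span (Set.range (Fy f g0 gp)
    ∪ Set.range (fun i => (rename Sum.inl (g0 i) : MvPolynomial (VarsY n n1 n2) ℝ))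
    ∪ Set.range (fun j => X (Sum.inr (Sum.inr j)) * rename Sum.inl (gp j)))

/-- F_k regarded as a polynomial in z = (x,u,v,s). -/
def Fz (f : MvPolynomial (Fin n) ℝ) (g0 : Fin n1 → MvPolynomial (Fin n) ℝ)
    (gp : Fin n2 → MvPolynomial (Fin n) ℝ) (k : Fin n) : MvPolynomial (VarsZ n n1 n2) ℝ :=
  rename Sum.inl (pderiv k f)
    - ∑ i, X (Sum.inr (Sum.inl i)) * rename Sum.inl (pderiv k (g0 i))
    - ∑ j, X (Sum.inr (Sum.inr (Sum.inl j))) * rename Sum.inl (pderiv k (gp j))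

/-- The gradient ideal I_grad ⊆ ℝ[x,u,v,s]. -/
def Igrad (f : MvPolynomial (Fin n) ℝ) (g0 : Fin n1 → MvPolynomial (Fin n) ℝ)
    (gp : Fin n2 → MvPolynomial (Fin n) ℝ) : Ideal (MvPolynomial (VarsZ n n1 n2) ℝ) :=
  Ideal.span (Set.range (Fz f g0 gp)
    ∪ Set.range (fun i => (rename Sum.inl (g0 i) : MvPolynomial (VarsZ n n1 n2) ℝ))
    ∪ Set.range (fun j => (rename Sum.inl (gp j) : MvPolynomial (VarsZ n n1 n2) ℝ)
        - X (Sum.inr (Sum.inr (Sum.inr j))) ^ 2)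
    ∪ Set.range (fun j => (X (Sum.inr (Sum.inr (Sum.inl j))) : MvPolynomial (VarsZ n n1 n2) ℝ)
        * X (Sum.inr (Sum.inr (Sum.inr j)))))

/-- The natural inclusion ℝ[x,u,v] → ℝ[x,u,v,s]. -/
def incYZ : MvPolynomial (VarsY n n1 n2) ℝ →ₐ[ℝ] MvPolynomial (VarsZ n n1 n2) ℝ :=
  rename (Sum.map id (Sum.map id Sum.inl))

namespace KKTElim
def emb : VarsY n n1 n2 → VarsZ n n1 n2 := Sum.map id (Sum.map id Sum.inl)
lemma emb_injective : Function.Injective (emb (n := n) (n1 := n1) (n2 := n2)) := by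
  rintro (a|a|a) (b|b|b) h <;> simp_all [emb]
def zs (j : Fin n2) : VarsZ n n1 n2 := Sum.inr (Sum.inr (Sum.inr j))
lemma zs_not_mem_range (j : Fin n2) : zs (n := n) (n1 := n1) j ∉ Set.range (emb (n := n) (n1 := n1) (n2 := n2)) := by
  rintro ⟨(a|a|a), h⟩ <;> simp [emb, zs] at h
def yexp (α : VarsZ n n1 n2 →₀ ℕ) : VarsY n n1 n2 →₀ ℕ :=
  Finsupp.comapDomain emb α (emb_injective.injOn)
lemma yexp_apply (α : VarsZ n n1 n2 →₀ ℕ) (a : VarsY n n1 n2) : yexp α a = α (emb a) := rfl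
lemma yexp_add (α β : VarsZ n n1 n2 →₀ ℕ) : yexp (α + β) = yexp α + yexp β :=
  Finsupp.comapDomain_add_of_injective emb_injective _ _
lemma yexp_mapDomain (γ : VarsY n n1 n2 →₀ ℕ) : yexp (Finsupp.mapDomain emb γ) = γ := by
  ext a; rw [yexp_apply, Finsupp.mapDomain_apply emb_injective]
lemma mapDomain_zs (γ : VarsY n n1 n2 →₀ ℕ) (j : Fin n2) :
    Finsupp.mapDomain emb γ (zs j) = 0 :=
  Finsupp.mapDomain_notin_range _ _ (zs_not_mem_range j)
lemma yexp_single_zs (j : Fin n2) (k : ℕ) : yexp (Finsupp.single (zs (n := n) (n1 := n1) j) k) = 0 := by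
  ext a; rw [yexp_apply, Finsupp.single_apply, if_neg, Finsupp.coe_zero, Pi.zero_apply]
  exact fun h => zs_not_mem_range j ⟨a, h.symm⟩
lemma single_zs_apply (j j' : Fin n2) (k : ℕ) :
    Finsupp.single (zs (n := n) (n1 := n1) j) k (zs j') = if j' = j then k else 0 := by
  rw [Finsupp.single_apply]
  by_cases h : j' = j
  · simp [h, zs]
  · rw [if_neg, if_neg h]; simp [zs]; exact fun hh => h hh.symm

variable (gp : Fin n2 → MvPolynomial (Fin n) ℝ)

/-- image of gp j in ℝ[y] -/
def gpy (j : Fin n2) : MvPolynomial (VarsY n n1 n2) ℝ := rename Sum.inl (gp j)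

open Classical in
/-- Reduction of the monomial with exponent α : replace s^(2k) by gp^k, kill odd s-powers. -/
def H (α : VarsZ n n1 n2 →₀ ℕ) : MvPolynomial (VarsY n n1 n2) ℝ :=
  if ∀ j, Even (α (zs j)) then
    monomial (yexp α) 1 * ∏ j, gpy gp j ^ (α (zs j) / 2)
  else 0

/-- The linear reduction map T : ℝ[z] → ℝ[y]. -/
def T : MvPolynomial (VarsZ n n1 n2) ℝ →ₗ[ℝ] MvPolynomial (VarsY n n1 n2) ℝ :=
  (basisMonomials (VarsZ n n1 n2) ℝ).constr ℕ (H gp)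

lemma T_monomial (α : VarsZ n n1 n2 →₀ ℕ) (c : ℝ) :
    T gp (monomial α c) = c • H gp α := by
  have h1 : (monomial α c : MvPolynomial (VarsZ n n1 n2) ℝ) = c • monomial α 1 := by
    rw [smul_monomial, smul_eq_mul, mul_one]
  rw [h1, map_smul]
  congr 1
  have := Module.Basis.constr_basis (basisMonomials (VarsZ n n1 n2) ℝ) ℕ (H gp) α
  rwa [coe_basisMonomials] at this

lemma H_mapDomain_add (γ : VarsY n n1 n2 →₀ ℕ) (β : VarsZ n n1 n2 →₀ ℕ) :
    H gp (Finsupp.mapDomain emb γ + β) = monomial γ 1 * H gp β := by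
  unfold H
  have hs : ∀ j, (Finsupp.mapDomain emb γ + β) (zs j) = β (zs j) := by
    intro j; rw [Finsupp.add_apply, mapDomain_zs, zero_add]
  by_cases hc : ∀ j, Even (β (zs j))
  · rw [if_pos (by intro j; rw [hs j]; exact hc j), if_pos hc]
    rw [yexp_add, yexp_mapDomain]
    rw [show (monomial (γ + yexp β) 1 : MvPolynomial (VarsY n n1 n2) ℝ)
        = monomial γ 1 * monomial (yexp β) 1 by rw [monomial_mul, mul_one]]
    rw [mul_assoc]
    congr 1
    congr 1
    exact Finset.prod_congr rfl fun j _ => by rw [hs j]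
  · rw [if_neg (by intro h; exact hc fun j => by have := h j; rwa [hs j] at this),
        if_neg hc, mul_zero]

lemma H_add_two (β : VarsZ n n1 n2 →₀ ℕ) (j : Fin n2) :
    H gp (β + Finsupp.single (zs j) 2) = gpy gp j * H gp β := by
  unfold H
  have hs : ∀ j', (β + Finsupp.single (zs j) 2 : VarsZ n n1 n2 →₀ ℕ) (zs j')
      = β (zs j') + if j' = j then 2 else 0 := by
    intro j'; rw [Finsupp.add_apply, single_zs_apply]
  have hcond : (∀ j', Even ((β + Finsupp.single (zs j) 2 : VarsZ n n1 n2 →₀ ℕ) (zs j'))) ↔ ∀ j', Even (β (zs j')) := by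
    refine forall_congr' fun j' => ?_
    rw [hs j']
    by_cases hj : j' = j
    · rw [if_pos hj, Nat.even_add]; simp
    · rw [if_neg hj, add_zero]
  by_cases hc : ∀ j', Even (β (zs j'))
  · rw [if_pos (hcond.mpr hc), if_pos hc]
    have hy : yexp (β + Finsupp.single (zs j) 2) = yexp β := by
      rw [yexp_add, yexp_single_zs, add_zero]
    rw [hy]
    have hprod : (∏ j', gpy (n1 := n1) gp j' ^ ((β + Finsupp.single (zs j) 2 : VarsZ n n1 n2 →₀ ℕ) (zs j') / 2))
        = gpy gp j * ∏ j', gpy gp j' ^ (β (zs j') / 2) := by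
      rw [show gpy gp j * ∏ j', gpy gp j' ^ (β (zs j') / 2)
          = ∏ j', gpy gp j' ^ (β (zs j') / 2) * (if j' = j then gpy gp j' else 1) by
        rw [Finset.prod_mul_distrib, Finset.prod_ite_eq' Finset.univ j (fun j' => gpy gp j')]
        simp [mul_comm]]
      refine Finset.prod_congr rfl fun j' _ => ?_
      rw [hs j']
      by_cases hj : j' = j
      · subst hj
        rw [if_pos rfl, if_pos rfl, Nat.add_div_right _ (by norm_num), pow_succ]
      · rw [if_neg hj, if_neg hj, add_zero, mul_one]
    rw [hprod]; ring
  · rw [if_neg fun h => hc (hcond.mp h), if_neg hc, mul_zero]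

lemma H_add_one_mem (β : VarsZ n n1 n2 →₀ ℕ) (j : Fin n2) :
    H gp (β + Finsupp.single (zs j) 1) ∈ Ideal.span {gpy (n1 := n1) gp j} := by
  unfold H
  split
  case isFalse => exact Ideal.zero_mem _
  case isTrue h =>
    have hj := h j
    rw [Finsupp.add_apply, single_zs_apply, if_pos rfl] at hj
    have hodd : ¬ Even (β (zs j)) := by
      rcases hj with ⟨m, hm⟩; intro ⟨m', hm'⟩; omega
    have hpos : 0 < (β + Finsupp.single (zs j) 1 : VarsZ n n1 n2 →₀ ℕ) (zs j) / 2 := by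
      rw [Finsupp.add_apply, single_zs_apply, if_pos rfl]
      rcases Nat.odd_iff.mpr (Nat.not_even_iff.mp hodd) with ⟨m, hm⟩
      omega
    rw [Ideal.mem_span_singleton]
    refine Dvd.dvd.mul_left ?_ _
    exact dvd_trans (dvd_pow_self _ hpos.ne')
      (Finset.dvd_prod_of_mem _ (Finset.mem_univ j))

lemma H_zero : H (n := n) (n1 := n1) gp 0 = 1 := by
  unfold H
  rw [if_pos (fun j => by simp)]
  have : yexp (0 : VarsZ n n1 n2 →₀ ℕ) = 0 := by
    ext a; rw [yexp_apply]; rfl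
  simp [this]


def incYZ' : MvPolynomial (VarsY n n1 n2) ℝ →ₐ[ℝ] MvPolynomial (VarsZ n n1 n2) ℝ :=
  rename (emb (n := n) (n1 := n1) (n2 := n2))

lemma incYZ'_monomial (γ : VarsY n n1 n2 →₀ ℕ) (c : ℝ) :
    incYZ' (monomial γ c) = monomial (Finsupp.mapDomain emb γ) c := by
  simp [incYZ', rename_monomial]

lemma TA (p : MvPolynomial (VarsY n n1 n2) ℝ) (q : MvPolynomial (VarsZ n n1 n2) ℝ) :
    T gp (incYZ' p * q) = p * T gp q := by
  induction p using MvPolynomial.induction_on' with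
  | add p1 p2 h1 h2 => rw [map_add, add_mul, map_add, h1, h2, add_mul]
  | monomial γ c =>
    induction q using MvPolynomial.induction_on' with
    | add q1 q2 h1 h2 => rw [mul_add, map_add, h1, h2, map_add, mul_add]
    | monomial β d =>
      rw [incYZ'_monomial, monomial_mul, T_monomial, T_monomial, H_mapDomain_add]
      rw [show (monomial γ c : MvPolynomial (VarsY n n1 n2) ℝ) = c • monomial γ 1 by
        rw [smul_monomial, smul_eq_mul, mul_one]]
      rw [smul_mul_assoc, mul_smul_comm, smul_smul, mul_comm c d]

lemma TB (q : MvPolynomial (VarsZ n n1 n2) ℝ) (j : Fin n2) :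
    T gp (q * X (zs j) ^ 2) = gpy gp j * T gp q := by
  induction q using MvPolynomial.induction_on' with
  | add q1 q2 h1 h2 => rw [add_mul, map_add, h1, h2, map_add, mul_add]
  | monomial β d =>
    rw [X_pow_eq_monomial, monomial_mul, T_monomial, T_monomial, mul_one, H_add_two,
      mul_smul_comm]

lemma TC (q : MvPolynomial (VarsZ n n1 n2) ℝ) (j : Fin n2) :
    T gp (q * X (zs j)) ∈ Ideal.span {gpy (n1 := n1) gp j} := by
  induction q using MvPolynomial.induction_on' with
  | add q1 q2 h1 h2 =>
    rw [add_mul, map_add]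
    exact Ideal.add_mem _ h1 h2
  | monomial β d =>
    have hX : (X (zs j) : MvPolynomial (VarsZ n n1 n2) ℝ) = monomial (Finsupp.single (zs j) 1) 1 := by
      rw [← pow_one (X (zs j) : MvPolynomial (VarsZ n n1 n2) ℝ), X_pow_eq_monomial]
    rw [hX, monomial_mul, T_monomial, mul_one, smul_eq_C_mul]
    exact Ideal.mul_mem_left _ _ (H_add_one_mem gp β j)

lemma T_one : T (n := n) (n1 := n1) gp 1 = 1 := by
  have h1 : (1 : MvPolynomial (VarsZ n n1 n2) ℝ) = monomial 0 1 := by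
    rw [monomial_zero', C_1]
  rw [h1, T_monomial, H_zero, one_smul]

lemma T_incYZ' (p : MvPolynomial (VarsY n n1 n2) ℝ) : T gp (incYZ' p) = p := by
  have := TA gp p 1
  rwa [mul_one, T_one, mul_one] at this

end KKTElim

namespace KKTElim

variable (f : MvPolynomial (Fin n) ℝ) (g0 : Fin n1 → MvPolynomial (Fin n) ℝ)
  (gp : Fin n2 → MvPolynomial (Fin n) ℝ)

lemma incYZ_eq : (incYZ : MvPolynomial (VarsY n n1 n2) ℝ →ₐ[ℝ] MvPolynomial (VarsZ n n1 n2) ℝ)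
    = incYZ' := rfl

lemma emb_comp_inl : (emb (n := n) (n1 := n1) (n2 := n2)) ∘ Sum.inl = Sum.inl := rfl

lemma incYZ'_rename (p : MvPolynomial (Fin n) ℝ) :
    incYZ' (n1 := n1) (n2 := n2) (rename Sum.inl p) = rename Sum.inl p := by
  show (rename emb) ((rename Sum.inl) p) = _
  rw [rename_rename, emb_comp_inl]

lemma incYZ'_Xu (i : Fin n1) :
    incYZ' (n := n) (n2 := n2) (X (Sum.inr (Sum.inl i)))
      = X (Sum.inr (Sum.inl i)) := by
  show (rename emb) (X _) = _
  rw [rename_X]; rfl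

lemma incYZ'_Xv (j : Fin n2) :
    incYZ' (n := n) (n1 := n1) (X (Sum.inr (Sum.inr j)))
      = X (Sum.inr (Sum.inr (Sum.inl j))) := by
  show (rename emb) (X _) = _
  rw [rename_X]; rfl

lemma incYZ'_Fy (k : Fin n) : incYZ' (Fy f g0 gp k) = Fz f g0 gp k := by
  rw [Fy, Fz, map_sub, map_sub, map_sum, map_sum, incYZ'_rename]
  congr 1
  · congr 1
    refine Finset.sum_congr rfl fun i _ => ?_
    rw [map_mul, incYZ'_rename, incYZ'_Xu]
  · refine Finset.sum_congr rfl fun j _ => ?_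
    rw [map_mul, incYZ'_rename, incYZ'_Xv]

lemma Fy_mem : ∀ k, Fy f g0 gp k ∈ IKKT f g0 gp := fun k =>
  Ideal.subset_span (by
    simp only [Set.union_assoc, Set.mem_union, Set.mem_range]
    exact Or.inl ⟨k, rfl⟩)

lemma g0y_mem : ∀ i, (rename Sum.inl (g0 i) : MvPolynomial (VarsY n n1 n2) ℝ)
    ∈ IKKT f g0 gp := fun i =>
  Ideal.subset_span (by
    simp only [Set.union_assoc, Set.mem_union, Set.mem_range]
    exact Or.inr (Or.inl ⟨i, rfl⟩))

lemma vgp_mem : ∀ j, (X (Sum.inr (Sum.inr j)) * rename Sum.inl (gp j)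
    : MvPolynomial (VarsY n n1 n2) ℝ) ∈ IKKT f g0 gp := fun j =>
  Ideal.subset_span (by
    simp only [Set.union_assoc, Set.mem_union, Set.mem_range]
    exact Or.inr (Or.inr ⟨j, rfl⟩))

end KKTElim

open KKTElim in

/-- The KKT ideal is the elimination of the variables `s` from the
gradient ideal: `I_KKT = I_grad ∩ ℝ[x,u,v]`, i.e. the preimage of `I_grad` under the
natural inclusion `ℝ[x,u,v] → ℝ[x,u,v,s]`. -/
theorem IKKT_eq_comap_Igrad (f : MvPolynomial (Fin n) ℝ)
    (g0 : Fin n1 → MvPolynomial (Fin n) ℝ) (gp : Fin n2 → MvPolynomial (Fin n) ℝ) :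
    IKKT f g0 gp = Ideal.comap (incYZ (n := n) (n1 := n1) (n2 := n2)) (Igrad f g0 gp) := by
  classical
  apply le_antisymm
  · rw [IKKT, Ideal.span_le]
    rintro w hw
    simp only [Set.union_assoc, Set.mem_union, Set.mem_range] at hw
    rw [SetLike.mem_coe, Ideal.mem_comap]
    obtain ⟨k, rfl⟩ | ⟨i, rfl⟩ | ⟨j, rfl⟩ := hw
    · rw [incYZ_eq, incYZ'_Fy]
      exact Ideal.subset_span (by
        simp only [Set.union_assoc, Set.mem_union, Set.mem_range]
        exact Or.inl ⟨k, rfl⟩)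
    · rw [incYZ_eq, incYZ'_rename]
      exact Ideal.subset_span (by
        simp only [Set.union_assoc, Set.mem_union, Set.mem_range]
        exact Or.inr (Or.inl ⟨i, rfl⟩))
    · rw [incYZ_eq, map_mul, incYZ'_rename, incYZ'_Xv]
      have hid : (X (Sum.inr (Sum.inr (Sum.inl j))) : MvPolynomial (VarsZ n n1 n2) ℝ)
            * rename Sum.inl (gp j)
          = X (Sum.inr (Sum.inr (Sum.inl j)))
              * ((rename Sum.inl (gp j) : MvPolynomial (VarsZ n n1 n2) ℝ)
                  - X (Sum.inr (Sum.inr (Sum.inr j))) ^ 2)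
            + (X (Sum.inr (Sum.inr (Sum.inl j))) * X (Sum.inr (Sum.inr (Sum.inr j))))
                * X (Sum.inr (Sum.inr (Sum.inr j))) := by ring
      rw [hid]
      refine Ideal.add_mem _ (Ideal.mul_mem_left _ _ ?_) (Ideal.mul_mem_right _ _ ?_)
      · exact Ideal.subset_span (by
          simp only [Set.union_assoc, Set.mem_union, Set.mem_range]
          exact Or.inr (Or.inr (Or.inl ⟨j, rfl⟩)))
      · exact Ideal.subset_span (by
          simp only [Set.union_assoc, Set.mem_union, Set.mem_range]
          exact Or.inr (Or.inr (Or.inr ⟨j, rfl⟩)))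
  · intro p hp
    rw [Ideal.mem_comap] at hp
    rw [Igrad] at hp
    have key : ∀ q, T gp (q * incYZ p) ∈ IKKT f g0 gp := by
      refine Submodule.span_induction
        (p := fun w _ => ∀ q, T gp (q * w) ∈ IKKT f g0 gp) ?_ ?_ ?_ ?_ hp
      · rintro w hw q
        simp only [Set.union_assoc, Set.mem_union, Set.mem_range] at hw
        obtain ⟨k, rfl⟩ | ⟨i, rfl⟩ | ⟨j, rfl⟩ | ⟨j, rfl⟩ := hw
        · rw [← incYZ'_Fy, mul_comm, TA]
          exact Ideal.mul_mem_right _ _ (Fy_mem f g0 gp k)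
        · rw [← incYZ'_rename (n1 := n1) (n2 := n2) (g0 i), mul_comm, TA]
          exact Ideal.mul_mem_right _ _ (g0y_mem f g0 gp i)
        · have hw : q * ((rename Sum.inl (gp j) : MvPolynomial (VarsZ n n1 n2) ℝ)
                - X (Sum.inr (Sum.inr (Sum.inr j))) ^ 2)
              = incYZ' (gpy gp j) * q - q * X (zs j) ^ 2 := by
            rw [gpy, incYZ'_rename, zs]; ring
          rw [hw, map_sub, TA, TB, sub_self]
          exact Ideal.zero_mem _
        · have hw : q * ((X (Sum.inr (Sum.inr (Sum.inl j))) : MvPolynomial (VarsZ n n1 n2) ℝ)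
                * X (Sum.inr (Sum.inr (Sum.inr j))))
              = incYZ' (X (Sum.inr (Sum.inr j)) : MvPolynomial (VarsY n n1 n2) ℝ)
                  * (q * X (zs j)) := by
            rw [incYZ'_Xv, zs]; ring
          rw [hw, TA]
          obtain ⟨r, hr⟩ := Ideal.mem_span_singleton.mp (TC gp q j)
          rw [hr, gpy]
          rw [show (X (Sum.inr (Sum.inr j)) : MvPolynomial (VarsY n n1 n2) ℝ)
              * (rename Sum.inl (gp j) * r)
            = r * (X (Sum.inr (Sum.inr j)) * rename Sum.inl (gp j)) by ring]
          exact Ideal.mul_mem_left _ _ (vgp_mem f g0 gp j)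
      · intro q; rw [mul_zero, map_zero]; exact Ideal.zero_mem _
      · intro x y _ _ ihx ihy q
        rw [mul_add, map_add]
        exact Ideal.add_mem _ (ihx q) (ihy q)
      · intro r x _ ih q
        rw [smul_eq_mul, ← mul_assoc]
        exact ih (q * r)
    have := key 1
    rwa [one_mul, incYZ_eq, T_incYZ'] at this


end
end

section
/- In the setting of the decomposition J = J_0 ∩ ⋯ ∩ J_s, there exist polynomials p_0, …, p_s ∈ ℂ[x_1,…,x_n] such that 1 − Σ_{i=0}^s p_i lies in the extension of J to ℂ[z], p_i ∈ ∩_{j≠i} (extension of J_j to ℂ[z]) for each i, and p_i has real coefficients (p_i ∈ ℝ[x_1,…,x_n]) for i = 0, …, r. -/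
open MvPolynomial

noncomputable section

variable {n n1 n2 : ℕ}

/-- Evaluation of a real polynomial at a complex point. -/
def evalC {σ : Type*} (p : MvPolynomial σ ℝ) (x : σ → ℂ) : ℂ :=
  eval x (MvPolynomial.map (algebraMap ℝ ℂ) p)

/-- Complex zero set of an ideal of a real polynomial ring. -/
def cZeros {σ : Type*} (I : Ideal (MvPolynomial σ ℝ)) : Set (σ → ℂ) :=
  {z | ∀ p ∈ I, eval z (MvPolynomial.map (algebraMap ℝ ℂ) p) = 0}

/-- Extension of an ideal of ℝ[z] to ℂ[z]. -/
def extC {σ : Type*} (I : Ideal (MvPolynomial σ ℝ)) : Ideal (MvPolynomial σ ℂ) :=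
  Ideal.map (MvPolynomial.map (algebraMap ℝ ℂ) : MvPolynomial σ ℝ →+* MvPolynomial σ ℂ) I

lemma exists_real_of_conj_fixed {τ : Type*} (P : MvPolynomial τ ℂ)
    (hP : MvPolynomial.map (starRingEnd ℂ) P = P) :
    ∃ q : MvPolynomial τ ℝ, MvPolynomial.map (algebraMap ℝ ℂ) q = P := by
  classical
  refine ⟨∑ m ∈ P.support, MvPolynomial.monomial m (P.coeff m).re, ?_⟩
  ext m
  have hco : (starRingEnd ℂ) (P.coeff m) = P.coeff m := by
    conv_rhs => rw [← hP]
    rw [MvPolynomial.coeff_map]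
  have hre : ((P.coeff m).re : ℂ) = P.coeff m := Complex.conj_eq_iff_re.mp hco
  rw [MvPolynomial.coeff_map, MvPolynomial.coeff_sum]
  simp only [MvPolynomial.coeff_monomial]
  rw [Finset.sum_ite_eq' P.support m]
  by_cases hm : m ∈ P.support
  · rw [if_pos hm]
    exact hre
  · have : P.coeff m = 0 := by simpa [MvPolynomial.mem_support_iff] using hm
    simp [hm, this]

lemma span_lagrange_eq_top {s : ℕ} (fval : Fin (s + 1) → ℂ) (hinj : Function.Injective fval)
    (N : ℕ) :
    Ideal.span (Set.range (fun i : Fin (s + 1) =>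
      ∏ k ∈ Finset.univ.erase i, (Polynomial.X - Polynomial.C (fval k)) ^ N)) = ⊤ := by
  classical
  set h : Fin (s + 1) → Polynomial ℂ := fun i =>
    ∏ k ∈ Finset.univ.erase i, (Polynomial.X - Polynomial.C (fval k)) ^ N with hh
  by_contra hI
  set I : Ideal (Polynomial ℂ) := Ideal.span (Set.range h) with hIdef
  obtain ⟨d, hd⟩ : ∃ d, I = Ideal.span {d} := Submodule.IsPrincipal.principal I
  have hdvd : ∀ i, d ∣ h i := fun i =>
    (Ideal.mem_span_singleton).mp (by
      rw [← hd]
      exact Ideal.subset_span ⟨i, rfl⟩)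
  have hne : ∀ i, h i ≠ 0 := by
    intro i
    refine Finset.prod_ne_zero_iff.mpr fun k _ => pow_ne_zero _ ?_
    exact Polynomial.X_sub_C_ne_zero _
  have hd0 : d ≠ 0 := fun h0 => (hne 0) (by
    simpa [h0] using hdvd 0)
  have hdu : ¬ IsUnit d := fun hu => hI (by
    rw [hd]
    exact Ideal.span_singleton_eq_top.mpr hu)
  have hdeg : 0 < d.degree := by
    rcases lt_or_ge 0 d.degree with h | h
    · exact h
    · exact absurd (Polynomial.isUnit_iff_degree_eq_zero.mpr
        (le_antisymm h (Polynomial.zero_le_degree_iff.mpr hd0))) hdu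
  obtain ⟨c, hc⟩ := Complex.exists_root hdeg
  have hroot : ∀ i, (h i).eval c = 0 := fun i => by
    obtain ⟨e, he⟩ := hdvd i
    rw [he, Polynomial.eval_mul]
    rw [Polynomial.IsRoot] at hc
    rw [hc, zero_mul]
  have : ∃ i, (h i).eval c ≠ 0 := by
    have key : ∀ i, (∀ k ∈ Finset.univ.erase i, fval k ≠ c) → (h i).eval c ≠ 0 := by
      intro i hk
      rw [hh]
      simp only [Polynomial.eval_prod, Polynomial.eval_pow, Polynomial.eval_sub,
        Polynomial.eval_X, Polynomial.eval_C]
      exact Finset.prod_ne_zero_iff.mpr fun k hkmem =>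
        pow_ne_zero _ (sub_ne_zero.mpr fun hx => hk k hkmem hx.symm)
    by_cases hex : ∃ i, fval i = c
    · obtain ⟨i, hi⟩ := hex
      exact ⟨i, key i fun k hkmem hkc => (Finset.mem_erase.mp hkmem).1 (hinj (hkc.trans hi.symm))⟩
    · exact ⟨0, key 0 fun k _ hkc => hex ⟨k, hkc⟩⟩
  obtain ⟨i, hi⟩ := this
  exact hi (hroot i)


/-- **Lagrange-type partition of unity.** In the setting of the
decomposition `J = J_0 ∩ ⋯ ∩ J_s` of an ideal of ℝ[z] with complex zero set V_grad,
there exist polynomials `p_0, …, p_s ∈ ℂ[x]` with `1 − Σ p_i` in the extension of `J` to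
ℂ[z], `p_i` in the extension of `J_j` for all `j ≠ i`, and `p_i` having real coefficients
for `i = 0,…,r`. -/
theorem lagrange_polynomials_of_decomposition (f : MvPolynomial (Fin n) ℝ)
    (g0 : Fin n1 → MvPolynomial (Fin n) ℝ) (gp : Fin n2 → MvPolynomial (Fin n) ℝ)
    (J : Ideal (MvPolynomial (VarsZ n n1 n2) ℝ))
    (hJ : cZeros J = cZeros (Igrad f g0 gp))
    (s : ℕ) (J' : Fin (s + 1) → Ideal (MvPolynomial (VarsZ n n1 n2) ℝ))
    (fval : Fin (s + 1) → ℂ) (r : ℤ) (hr1 : -1 ≤ r) (hr2 : r ≤ (s : ℤ))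
    (hdec : J = ⨅ i, J' i)
    (hconst : ∀ i, ∀ z ∈ cZeros (J' i), evalC f (z ∘ Sum.inl) = fval i)
    (hinj : Function.Injective fval)
    (hreal : ∀ i : Fin (s + 1), (i : ℤ) ≤ r → ∃ a : ℝ, fval i = (a : ℂ))
    (hconj : ∀ i : Fin (s + 1), r < (i : ℤ) →
      ∃ j : Fin (s + 1), r < (j : ℤ) ∧ fval j = starRingEnd ℂ (fval i)) :
    ∃ p : Fin (s + 1) → MvPolynomial (Fin n) ℂ,
      (1 - ∑ i, rename Sum.inl (p i) ∈ extC J) ∧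
      (∀ i, ∀ j, j ≠ i →
        (rename Sum.inl (p i) : MvPolynomial (VarsZ n n1 n2) ℂ) ∈ extC (J' j)) ∧
      (∀ i : Fin (s + 1), (i : ℤ) ≤ r →
        ∃ q : MvPolynomial (Fin n) ℝ, p i = MvPolynomial.map (algebraMap ℝ ℂ) q) := by
  classical
  set fC : MvPolynomial (Fin n) ℂ := MvPolynomial.map (algebraMap ℝ ℂ) f with hfC
  set F : MvPolynomial (VarsZ n n1 n2) ℂ := rename Sum.inl fC with hFdef
  -- Step A : some power of F - fval j lies in extC (J' j)
  have hrad : ∀ j, (F - MvPolynomial.C (fval j)) ∈ (extC (J' j)).radical := by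
    intro j
    rw [← MvPolynomial.vanishingIdeal_zeroLocus_eq_radical (K := ℂ)]
    rw [MvPolynomial.mem_vanishingIdeal_iff]
    intro z hz
    show eval z (F - MvPolynomial.C (fval j)) = 0
    have hzc : z ∈ cZeros (J' j) := by
      intro p hp
      exact hz _ (Ideal.mem_map_of_mem _ hp)
    have hcz := hconst j z hzc
    rw [map_sub, MvPolynomial.eval_C, sub_eq_zero, hFdef, MvPolynomial.eval_rename]
    exact hcz
  choose Nf hNf using fun j => (Ideal.mem_radical_iff.mp (hrad j))
  set N := Finset.univ.sup Nf with hNdef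
  have hGN : ∀ j, (F - MvPolynomial.C (fval j)) ^ N ∈ extC (J' j) := by
    intro j
    have hle : Nf j ≤ N := Finset.le_sup (Finset.mem_univ j)
    rw [← Nat.add_sub_cancel' hle, pow_add]
    exact Ideal.mul_mem_right _ _ (hNf j)
  -- univariate Lagrange-type polynomials
  set h : Fin (s + 1) → Polynomial ℂ := fun i =>
    ∏ k ∈ Finset.univ.erase i, (Polynomial.X - Polynomial.C (fval k)) ^ N with hh
  have h1 : (1 : Polynomial ℂ) ∈ Ideal.span (Set.range h) := by
    rw [span_lagrange_eq_top fval hinj N]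
    exact Submodule.mem_top
  rw [← Ideal.submodule_span_eq, Submodule.mem_span_range_iff_exists_fun] at h1
  obtain ⟨a, ha⟩ := h1
  simp only [smul_eq_mul] at ha
  -- the conjugation permutation
  have hex : ∀ i, ∃ j, fval j = starRingEnd ℂ (fval i) := by
    intro i
    rcases le_or_gt (i : ℤ) r with hi | hi
    · obtain ⟨x, hx⟩ := hreal i hi
      exact ⟨i, by rw [hx, Complex.conj_ofReal]⟩
    · obtain ⟨j, _, hj⟩ := hconj i hi
      exact ⟨j, hj⟩
  choose σ hσ using hex
  have hσσ : ∀ i, σ (σ i) = i := by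
    intro i
    apply hinj
    rw [hσ, hσ, Complex.conj_conj]
  have hσreal : ∀ i : Fin (s + 1), (i : ℤ) ≤ r → σ i = i := by
    intro i hi
    apply hinj
    obtain ⟨x, hx⟩ := hreal i hi
    rw [hσ, hx, Complex.conj_ofReal]
  set σE : Equiv.Perm (Fin (s + 1)) := ⟨σ, σ, hσσ, hσσ⟩ with hσE
  -- conjugation on univariate polynomials
  set cj : Polynomial ℂ →+* Polynomial ℂ := Polynomial.mapRingHom (starRingEnd ℂ) with hcj
  have hcjcj : ∀ P : Polynomial ℂ, cj (cj P) = P := by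
    intro P
    simp only [hcj, Polynomial.coe_mapRingHom, Polynomial.map_map]
    rw [show (starRingEnd ℂ).comp (starRingEnd ℂ) = RingHom.id ℂ from
      RingHom.ext fun z => Complex.conj_conj z, Polynomial.map_id]
  have hcjh : ∀ i, cj (h i) = h (σ i) := by
    intro i
    rw [hh]
    simp only [hcj, Polynomial.coe_mapRingHom, Polynomial.map_prod, Polynomial.map_pow,
      Polynomial.map_sub, Polynomial.map_X, Polynomial.map_C]
    refine Finset.prod_nbij' σ σ ?_ ?_ ?_ ?_ ?_
    · intro k hk
      rw [Finset.mem_erase] at hk ⊢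
      refine ⟨fun hc => hk.1 ?_, Finset.mem_univ _⟩
      have := congrArg σ hc
      rwa [hσσ, hσσ] at this
    · intro k hk
      rw [Finset.mem_erase] at hk ⊢
      refine ⟨fun hc => hk.1 ?_, Finset.mem_univ _⟩
      rw [← hc, hσσ]
    · intro k _
      exact hσσ k
    · intro k _
      exact hσσ k
    · intro k _
      rw [hσ k]
  -- the real-symmetrized coefficients
  set b : Fin (s + 1) → Polynomial ℂ := fun i =>
    Polynomial.C (2⁻¹ : ℂ) * (a i + cj (a (σ i))) with hb
  have hb1 : ∑ i, b i * h i = 1 := by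
    have h2 : ∑ i, cj (a (σ i)) * h i = 1 := by
      have hc1 : ∑ i, cj (a i) * cj (h i) = 1 := by
        have hthis := congrArg cj ha
        rw [map_one] at hthis
        rw [← hthis, map_sum]
        exact Finset.sum_congr rfl fun i _ => (map_mul cj _ _).symm
      have hreidx : ∑ i, cj (a i) * h (σ i) = ∑ i, cj (a (σ i)) * h i :=
        Fintype.sum_equiv σE (fun x => cj (a x) * h (σ x)) (fun x => cj (a (σ x)) * h x)
          (fun x => by
            show cj (a x) * h (σ x) = cj (a (σ (σE x))) * h (σE x)
            show cj (a x) * h (σ x) = cj (a (σ (σ x))) * h (σ x)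
            rw [hσσ])
      rw [← hreidx]
      rw [← hc1]
      exact Finset.sum_congr rfl fun i _ => by rw [hcjh]
    calc ∑ i, b i * h i
        = Polynomial.C (2⁻¹ : ℂ) * ((∑ i, a i * h i) + ∑ i, cj (a (σ i)) * h i) := by
          rw [hb]
          rw [← Finset.sum_add_distrib, Finset.mul_sum]
          refine Finset.sum_congr rfl fun i _ => ?_
          ring
      _ = 1 := by
          rw [ha, h2]
          rw [show (1 : Polynomial ℂ) + 1 = Polynomial.C 2 by
            rw [← Polynomial.C_1, ← Polynomial.C_add]; norm_num]
          rw [← Polynomial.C_mul]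
          norm_num
  -- the multivariate polynomials
  set p : Fin (s + 1) → MvPolynomial (Fin n) ℂ := fun i =>
    Polynomial.aeval fC (b i * h i) with hp
  refine ⟨p, ?_, ?_, ?_⟩
  · -- sum is 1
    have hsum : ∑ i, (rename Sum.inl (p i) : MvPolynomial (VarsZ n n1 n2) ℂ) = 1 := by
      rw [← map_sum]
      have : ∑ i, p i = 1 := by
        rw [hp]
        rw [← map_sum, hb1, map_one]
      rw [this, map_one]
    rw [hsum, sub_self]
    exact Ideal.zero_mem _
  · -- membership
    intro i j hj
    have hji : j ∈ Finset.univ.erase i := Finset.mem_erase.mpr ⟨hj, Finset.mem_univ _⟩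
    have hsplit : h i = (Polynomial.X - Polynomial.C (fval j)) ^ N *
        ∏ k ∈ (Finset.univ.erase i).erase j, (Polynomial.X - Polynomial.C (fval k)) ^ N :=
      (Finset.mul_prod_erase _ _ hji).symm
    have hfac : b i * h i = (b i * ∏ k ∈ (Finset.univ.erase i).erase j,
        (Polynomial.X - Polynomial.C (fval k)) ^ N) *
        (Polynomial.X - Polynomial.C (fval j)) ^ N := by
      rw [hsplit]
      ring
    have hrp : (rename Sum.inl (p i) : MvPolynomial (VarsZ n n1 n2) ℂ) =
        Polynomial.aeval F (b i * h i) := by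
      rw [hp, hFdef]
      exact (Polynomial.aeval_algHom_apply
        (rename Sum.inl : MvPolynomial (Fin n) ℂ →ₐ[ℂ] MvPolynomial (VarsZ n n1 n2) ℂ)
        fC (b i * h i)).symm
    rw [hrp, hfac, map_mul]
    refine Ideal.mul_mem_left _ _ ?_
    have : (Polynomial.aeval F) ((Polynomial.X - Polynomial.C (fval j)) ^ N) =
        (F - MvPolynomial.C (fval j)) ^ N := by
      rw [map_pow, map_sub, Polynomial.aeval_X, Polynomial.aeval_C, MvPolynomial.algebraMap_eq]
    rw [this]
    exact hGN j
  · -- reality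
    intro i hi
    have hσi : σ i = i := hσreal i hi
    -- conjugation commutes with aeval at fC
    have hfCconj : MvPolynomial.map (starRingEnd ℂ) fC = fC := by
      rw [hfC, MvPolynomial.map_map, show (starRingEnd ℂ).comp (algebraMap ℝ ℂ) =
        algebraMap ℝ ℂ from RingHom.ext fun x => Complex.conj_ofReal x]
    have haev : ∀ P : Polynomial ℂ,
        MvPolynomial.map (starRingEnd ℂ) (Polynomial.aeval fC P) =
          Polynomial.aeval fC (cj P) := by
      intro P
      rw [Polynomial.aeval_def, Polynomial.hom_eval₂]
      rw [hcj, Polynomial.coe_mapRingHom, Polynomial.aeval_def, Polynomial.eval₂_map,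
        hfCconj]
      congr 1
      ext c
      simp [MvPolynomial.algebraMap_eq]
    have hbconj : cj (b i) = b i := by
      rw [hb]
      simp only [map_mul, map_add, hσi]
      rw [hcjcj (a i)]
      rw [show cj (Polynomial.C (2⁻¹ : ℂ)) = Polynomial.C (2⁻¹ : ℂ) by
        simp [hcj, Polynomial.map_C, map_inv₀, Complex.conj_ofNat]]
      ring
    have hhconj : cj (h i) = h i := by rw [hcjh, hσi]
    have hPconj : MvPolynomial.map (starRingEnd ℂ) (p i) = p i := by
      rw [hp, haev, map_mul, hbconj, hhconj]
    obtain ⟨q, hq⟩ := exists_real_of_conj_fixed (p i) hPconj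
    exact ⟨q, hq.symm⟩



end
end

section
/- Let J be an ideal of ℝ[z_1,…,z_N], let f ∈ ℝ[x_1,…,x_n] where x_1,…,x_n is a subset of the variables z_1,…,z_N, and suppose f takes the constant value f* on the complex zero set V_ℂ(J) ⊆ ℂ^N, where f* ∈ ℝ and f* ≥ 0. Then there exists t ∈ ℕ such that for every ε > 0 there exists q ∈ ℝ[x_1,…,x_n] with deg q ≤ t and f + ε − q² ∈ J. -/
open MvPolynomial

noncomputable section

namespace SqrtAux

variable {σ : Type*}

/-- Real part of coefficients. -/
def reP (p : MvPolynomial σ ℂ) : MvPolynomial σ ℝ :=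
  AddMonoidAlgebra.ofCoeff (Finsupp.mapRange Complex.re Complex.zero_re (AddMonoidAlgebra.coeff p))

/-- Imaginary part of coefficients. -/
def imP (p : MvPolynomial σ ℂ) : MvPolynomial σ ℝ :=
  AddMonoidAlgebra.ofCoeff (Finsupp.mapRange Complex.im Complex.zero_im (AddMonoidAlgebra.coeff p))

lemma coeff_reP (m : σ →₀ ℕ) (p : MvPolynomial σ ℂ) : coeff m (reP p) = (coeff m p).re := rfl

lemma coeff_imP (m : σ →₀ ℕ) (p : MvPolynomial σ ℂ) : coeff m (imP p) = (coeff m p).im := rfl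

lemma reP_add (p q : MvPolynomial σ ℂ) : reP (p + q) = reP p + reP q := by
  apply MvPolynomial.ext; intro m
  simp [coeff_reP, coeff_add]

lemma imP_add (p q : MvPolynomial σ ℂ) : imP (p + q) = imP p + imP q := by
  apply MvPolynomial.ext; intro m
  simp [coeff_imP, coeff_add]

lemma reP_map (a : MvPolynomial σ ℝ) : reP (MvPolynomial.map (algebraMap ℝ ℂ) a) = a := by
  apply MvPolynomial.ext; intro m
  simp [coeff_reP, coeff_map]

lemma imP_map (a : MvPolynomial σ ℝ) : imP (MvPolynomial.map (algebraMap ℝ ℂ) a) = 0 := by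
  apply MvPolynomial.ext; intro m
  simp [coeff_imP, coeff_map]

lemma reP_map_mul (a : MvPolynomial σ ℝ) (x : MvPolynomial σ ℂ) :
    reP (MvPolynomial.map (algebraMap ℝ ℂ) a * x) = a * reP x := by
  classical
  apply MvPolynomial.ext; intro m
  rw [coeff_reP, coeff_mul, coeff_mul, Complex.re_sum]
  refine Finset.sum_congr rfl fun u _ => ?_
  rw [coeff_map, coeff_reP]
  exact Complex.re_ofReal_mul _ _

lemma imP_map_mul (a : MvPolynomial σ ℝ) (x : MvPolynomial σ ℂ) :
    imP (MvPolynomial.map (algebraMap ℝ ℂ) a * x) = a * imP x := by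
  classical
  apply MvPolynomial.ext; intro m
  rw [coeff_imP, coeff_mul, coeff_mul, Complex.im_sum]
  refine Finset.sum_congr rfl fun u _ => ?_
  rw [coeff_map, coeff_imP]
  simp [Complex.mul_im]

lemma reP_I_mul (x : MvPolynomial σ ℂ) : reP (C Complex.I * x) = - imP x := by
  apply MvPolynomial.ext; intro m
  simp [coeff_reP, coeff_imP, coeff_C_mul, Complex.mul_re]

lemma imP_I_mul (x : MvPolynomial σ ℂ) : imP (C Complex.I * x) = reP x := by
  apply MvPolynomial.ext; intro m
  simp [coeff_reP, coeff_imP, coeff_C_mul, Complex.mul_im]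

lemma decomp (x : MvPolynomial σ ℂ) :
    x = MvPolynomial.map (algebraMap ℝ ℂ) (reP x)
        + C Complex.I * MvPolynomial.map (algebraMap ℝ ℂ) (imP x) := by
  apply MvPolynomial.ext; intro m
  simp only [coeff_add, coeff_map, coeff_C_mul, coeff_reP, coeff_imP]
  rw [mul_comm]
  simp only [Complex.coe_algebraMap]
  exact (Complex.re_add_im _).symm

lemma mem_of_mem_map (J : Ideal (MvPolynomial σ ℝ)) (x : MvPolynomial σ ℂ)
    (hx : x ∈ Ideal.map (MvPolynomial.map (algebraMap ℝ ℂ)) J) :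
    reP x ∈ J ∧ imP x ∈ J := by
  rw [Ideal.map, Ideal.span, ← Submodule.mem_toAddSubmonoid] at hx
  refine Submodule.span_induction ?_ ?_ ?_ ?_ hx
  · rintro y ⟨p, hp, rfl⟩
    rw [reP_map, imP_map]
    exact ⟨hp, J.zero_mem⟩
  · constructor <;>
    · convert J.zero_mem
      apply MvPolynomial.ext; intro m; simp [coeff_reP, coeff_imP]
  · intro y z _ _ hy hz
    rw [reP_add, imP_add]
    exact ⟨J.add_mem hy.1 hz.1, J.add_mem hy.2 hz.2⟩
  · intro c y _ hy
    have : c • y = MvPolynomial.map (algebraMap ℝ ℂ) (reP y) * c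
        + C Complex.I * (MvPolynomial.map (algebraMap ℝ ℂ) (imP y) * c) := by
      rw [smul_eq_mul]
      conv_lhs => rw [decomp y]
      ring
    rw [this, reP_add, imP_add, reP_map_mul, imP_map_mul, reP_I_mul, imP_I_mul,
      reP_map_mul, imP_map_mul]
    constructor
    · exact J.add_mem (J.mul_mem_right _ hy.1) (J.neg_mem (J.mul_mem_right _ hy.2))
    · exact J.add_mem (J.mul_mem_right _ hy.1) (J.mul_mem_right _ hy.2)

lemma mem_of_map_mem (J : Ideal (MvPolynomial σ ℝ)) (p : MvPolynomial σ ℝ)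
    (hp : MvPolynomial.map (algebraMap ℝ ℂ) p ∈ Ideal.map (MvPolynomial.map (algebraMap ℝ ℂ)) J) :
    p ∈ J := by
  have := (mem_of_mem_map J _ hp).1
  rwa [reP_map] at this

open Polynomial in
lemma sqrt_trunc (c : ℝ) (hc : 0 < c) (k : ℕ) :
    ∃ Q : Polynomial ℝ, Q.natDegree ≤ k ∧
      (Polynomial.X : Polynomial ℝ) ^ (k + 1) ∣ Q ^ 2 - (Polynomial.C c + Polynomial.X) := by
  induction k with
  | zero =>
    refine ⟨Polynomial.C (Real.sqrt c), by simp, -1, ?_⟩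
    have h : (Polynomial.C (Real.sqrt c) : Polynomial ℝ) ^ 2 = Polynomial.C c := by
      rw [← Polynomial.C_pow, Real.sq_sqrt hc.le]
    rw [h]; ring
  | succ k ih =>
    obtain ⟨Q, hdeg, R, hR⟩ := ih
    have hq0 : Q.coeff 0 ^ 2 = c := by
      have := congrArg (Polynomial.eval 0) hR
      simp [Polynomial.coeff_zero_eq_eval_zero] at this
      rw [Polynomial.coeff_zero_eq_eval_zero]
      linarith
    have hq0ne : Q.coeff 0 ≠ 0 := by
      intro h; rw [h] at hq0; simp at hq0; exact hc.ne' hq0.symm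
    set a : ℝ := -(R.coeff 0) / (2 * Q.coeff 0) with ha
    refine ⟨Q + Polynomial.C a * Polynomial.X ^ (k + 1), ?_, ?_⟩
    · refine le_trans (Polynomial.natDegree_add_le _ _) (max_le (hdeg.trans (Nat.le_succ k)) ?_)
      exact le_trans (Polynomial.natDegree_C_mul_le _ _) (by simp)
    · have hS : (Q + Polynomial.C a * Polynomial.X ^ (k + 1)) ^ 2 - (Polynomial.C c + Polynomial.X)
          = Polynomial.X ^ (k + 1) *
            (R + Polynomial.C (2 * a) * Q + Polynomial.C (a ^ 2) * Polynomial.X ^ (k + 1)) := by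
        simp only [map_mul, map_pow, map_ofNat]
        linear_combination hR
      have hXdvd : Polynomial.X ∣
          (R + Polynomial.C (2 * a) * Q + Polynomial.C (a ^ 2) * Polynomial.X ^ (k + 1)) := by
        rw [Polynomial.X_dvd_iff]
        simp only [Polynomial.coeff_add, Polynomial.coeff_C_mul, Polynomial.coeff_X_pow,
          if_neg (Nat.succ_ne_zero k).symm, mul_zero, add_zero]
        rw [ha]
        field_simp
        ring
      obtain ⟨T, hT⟩ := hXdvd
      exact ⟨T, by rw [hS, hT]; ring⟩

lemma totalDegree_aeval_le (g : MvPolynomial σ ℝ) (Q : Polynomial ℝ) :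
    (Polynomial.aeval g Q).totalDegree ≤ Q.natDegree * g.totalDegree := by
  rw [Polynomial.aeval_eq_sum_range]
  refine le_trans (totalDegree_finset_sum _ _) (Finset.sup_le fun i hi => ?_)
  refine le_trans (totalDegree_smul_le _ _) ?_
  refine le_trans (totalDegree_pow _ _) ?_
  exact Nat.mul_le_mul_right _ (Nat.lt_succ_iff.mp (Finset.mem_range.mp hi))

end SqrtAux

/-- Let `J` be an ideal of `ℝ[z_1,…,z_N]`, and let
`f ∈ ℝ[x_1,…,x_n]`, where the variables `x` are embedded into the variables `z` by an
injection `ι`. Suppose `f` takes the constant value `f* ∈ ℝ`, `f* ≥ 0`, on the complex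
zero set of `J`. Then there is a `t ∈ ℕ` such that for every `ε > 0` there is a
`q ∈ ℝ[x_1,…,x_n]` with `deg q ≤ t` and `f + ε − q² ∈ J`. -/
theorem exists_degree_bound_sqrt_approx {N n : ℕ}
    (J : Ideal (MvPolynomial (Fin N) ℝ)) (ι : Fin n ↪ Fin N)
    (f : MvPolynomial (Fin n) ℝ) (fstar : ℝ) (hfstar : 0 ≤ fstar)
    (hconst : ∀ z : Fin N → ℂ,
      (∀ p ∈ J, eval z (MvPolynomial.map (algebraMap ℝ ℂ) p) = 0) →
      eval z (MvPolynomial.map (algebraMap ℝ ℂ) (rename ι f)) = (fstar : ℂ)) :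
    ∃ t : ℕ, ∀ ε : ℝ, 0 < ε → ∃ q : MvPolynomial (Fin n) ℝ,
      q.totalDegree ≤ t ∧
      rename ι f + C ε - (rename ι q) ^ 2 ∈ J := by
  classical
  set P : MvPolynomial (Fin N) ℝ := rename ι f - C fstar with hP
  have hvan : MvPolynomial.map (algebraMap ℝ ℂ) P ∈
      Ideal.radical (Ideal.map (MvPolynomial.map (algebraMap ℝ ℂ)) J) := by
    rw [← vanishingIdeal_zeroLocus_eq_radical (K := ℂ)]
    refine (mem_vanishingIdeal_iff).mpr fun z hz => ?_
    have h2 := hconst z (fun p hp => by simpa using hz _ (Ideal.mem_map_of_mem _ hp))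
    simp [hP, h2]
  obtain ⟨k, hk⟩ := Ideal.mem_radical_iff.mp hvan
  have hPk : P ^ k ∈ J := by
    apply SqrtAux.mem_of_map_mem
    rwa [map_pow]
  set g : MvPolynomial (Fin n) ℝ := f - C fstar with hg
  have hrg : rename ι g = P := by
    simp [hg, hP, map_sub, rename_C]
  refine ⟨(k + 1) * g.totalDegree, fun ε hε => ?_⟩
  have hc : 0 < fstar + ε := by linarith
  obtain ⟨Q, hQdeg, R, hR⟩ := SqrtAux.sqrt_trunc (fstar + ε) hc k
  refine ⟨Polynomial.aeval g Q, ?_, ?_⟩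
  · exact le_trans (SqrtAux.totalDegree_aeval_le g Q)
      (Nat.mul_le_mul_right _ (hQdeg.trans (Nat.le_succ k)))
  · have h0 := congrArg (Polynomial.aeval g) hR
    simp only [map_sub, map_add, map_mul, map_pow, Polynomial.aeval_X, Polynomial.aeval_C,
      MvPolynomial.algebraMap_eq] at h0
    have h1 : (Polynomial.aeval g Q) ^ 2 - (f + C ε) = g ^ (k + 1) * Polynomial.aeval g R := by
      simp only [hg] at h0 ⊢
      linear_combination h0
    have h2 := congrArg (rename ι) h1
    simp only [map_sub, map_add, map_mul, map_pow, rename_C, hrg] at h2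
    have h3 : rename ι f + C ε - (rename ι (Polynomial.aeval g Q)) ^ 2
        = -(P ^ (k + 1) * rename ι (Polynomial.aeval g R)) := by
      rw [← h2]; ring
    rw [h3]
    exact J.neg_mem (J.mul_mem_right _ (pow_succ P k ▸ J.mul_mem_right P hPk))

end
end

section
/- Let C = (C^0; C^+) be a set of constraints in ℝ[x]. There exists t_0 ∈ ℕ such that for all t ≥ t_0 and all Λ ∈ L_t(C), the C^+-radical √[C^+]{C^0} is contained in the ideal (ker M_Λ^t) of ℝ[x] generated by the kernel of the truncated Hankel operator of Λ. -/
open MvPolynomial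

noncomputable section

variable {n : ℕ}

/-- A sum of squares of polynomials. -/
def IsSOS {σ : Type*} (p : MvPolynomial σ ℝ) : Prop :=
  ∃ (k : ℕ) (q : Fin k → MvPolynomial σ ℝ), p = ∑ i, q i ^ 2

/-- Product (c_1^+)^{ε_1} ⋯ (c_l^+)^{ε_l}. -/
def prodEps {l : ℕ} (cp : Fin l → MvPolynomial (Fin n) ℝ) (ε : Fin l → Bool) :
    MvPolynomial (Fin n) ℝ :=
  ∏ j, if ε j then cp j else 1

/-- Membership of the preordering P^+(C) generated by the nonnegativity constraints. -/
def InPreorderPos {l : ℕ} (cp : Fin l → MvPolynomial (Fin n) ℝ)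
    (p : MvPolynomial (Fin n) ℝ) : Prop :=
  ∃ σs : (Fin l → Bool) → MvPolynomial (Fin n) ℝ,
    (∀ ε, IsSOS (σs ε)) ∧ p = ∑ ε, σs ε * prodEps cp ε

/-- Membership of the truncated preordering P_t(C). -/
def InTruncPre {l1 l2 : ℕ} (t : ℕ) (c0 : Fin l1 → MvPolynomial (Fin n) ℝ)
    (cp : Fin l2 → MvPolynomial (Fin n) ℝ) (p : MvPolynomial (Fin n) ℝ) : Prop :=
  ∃ (h : Fin l1 → MvPolynomial (Fin n) ℝ) (σs : (Fin l2 → Bool) → MvPolynomial (Fin n) ℝ),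
    (∀ i, (h i * c0 i).totalDegree ≤ 2 * t) ∧
    (∀ ε, IsSOS (σs ε)) ∧
    (∀ ε, (σs ε * prodEps cp ε).totalDegree ≤ 2 * t) ∧
    p = ∑ i, h i * c0 i + ∑ ε, σs ε * prodEps cp ε

/-- Membership of L_t(C): linear forms with Λ(1) = 1 that are nonnegative on P_t(C). -/
def MemL {l1 l2 : ℕ} (t : ℕ) (c0 : Fin l1 → MvPolynomial (Fin n) ℝ)
    (cp : Fin l2 → MvPolynomial (Fin n) ℝ)
    (Λ : MvPolynomial (Fin n) ℝ →ₗ[ℝ] ℝ) : Prop :=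
  Λ 1 = 1 ∧ ∀ p, InTruncPre t c0 cp p → 0 ≤ Λ p

/-- Kernel of the truncated Hankel operator M_Λ^t. -/
def kerM (t : ℕ) (Λ : MvPolynomial (Fin n) ℝ →ₗ[ℝ] ℝ) : Set (MvPolynomial (Fin n) ℝ) :=
  {p | p.totalDegree ≤ t ∧ ∀ q : MvPolynomial (Fin n) ℝ, q.totalDegree ≤ t → Λ (p * q) = 0}

/-- Membership of the C^+-radical of C^0. -/
def InCplusRadical {l1 l2 : ℕ} (c0 : Fin l1 → MvPolynomial (Fin n) ℝ)
    (cp : Fin l2 → MvPolynomial (Fin n) ℝ) (p : MvPolynomial (Fin n) ℝ) : Prop :=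
  ∃ m : ℕ, 1 ≤ m ∧ ∃ q : MvPolynomial (Fin n) ℝ,
    InPreorderPos cp q ∧ p ^ (2 * m) + q ∈ Ideal.span (Set.range c0)

lemma isSOS_zero {σ : Type*} : IsSOS (0 : MvPolynomial σ ℝ) :=
  ⟨0, fun i => i.elim0, by simp⟩

lemma isSOS_sq {σ : Type*} (p : MvPolynomial σ ℝ) : IsSOS (p ^ 2) :=
  ⟨1, fun _ => p, by simp⟩

lemma prodEps_false {l2 : ℕ} (cp : Fin l2 → MvPolynomial (Fin n) ℝ) :
    prodEps cp (fun _ => false) = 1 := by simp [prodEps]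

/-- A single square `p^2` with `deg p ≤ t` is in the truncated preordering. -/
lemma sq_mem_trunc {l1 l2 : ℕ} (t : ℕ) (c0 : Fin l1 → MvPolynomial (Fin n) ℝ)
    (cp : Fin l2 → MvPolynomial (Fin n) ℝ) (p : MvPolynomial (Fin n) ℝ)
    (hp : p.totalDegree ≤ t) : InTruncPre t c0 cp (p ^ 2) := by
  refine ⟨0, fun ε => if ε = (fun _ => false) then p ^ 2 else 0, ?_, ?_, ?_, ?_⟩
  · intro i; simp
  · intro ε
    by_cases hε : ε = fun _ => false
    · simp only [hε, if_pos rfl]; exact isSOS_sq p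
    · simp only [if_neg hε]; exact isSOS_zero
  · intro ε
    by_cases hε : ε = fun _ => false
    · subst hε
      simp only [if_pos rfl, prodEps_false, mul_one]
      calc (p ^ 2).totalDegree ≤ 2 * p.totalDegree := totalDegree_pow p 2
        _ ≤ 2 * t := by omega
    · simp [if_neg hε]
  · have : ∑ ε : Fin l2 → Bool,
        (if ε = (fun _ => false) then p ^ 2 else 0) * prodEps cp ε
        = p ^ 2 := by
      rw [Finset.sum_eq_single (fun _ => false)]
      · simp [prodEps_false]
      · intro b _ hb; simp [if_neg hb]
      · intro h; exact absurd (Finset.mem_univ _) h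
    simp [this, prodEps_false]

lemma sq_nonneg_of_memL {l1 l2 t : ℕ} {c0 : Fin l1 → MvPolynomial (Fin n) ℝ}
    {cp : Fin l2 → MvPolynomial (Fin n) ℝ} {Λ : MvPolynomial (Fin n) ℝ →ₗ[ℝ] ℝ}
    (hΛ : MemL t c0 cp Λ) (p : MvPolynomial (Fin n) ℝ) (hp : p.totalDegree ≤ t) :
    0 ≤ Λ (p ^ 2) :=
  hΛ.2 _ (sq_mem_trunc t c0 cp p hp)

/-- Cauchy–Schwarz style vanishing. -/
lemma CS_vanish {t : ℕ} {Λ : MvPolynomial (Fin n) ℝ →ₗ[ℝ] ℝ}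
    (hpos : ∀ p : MvPolynomial (Fin n) ℝ, p.totalDegree ≤ t → 0 ≤ Λ (p ^ 2))
    (a b : MvPolynomial (Fin n) ℝ) (ha : a.totalDegree ≤ t) (hb : b.totalDegree ≤ t)
    (h0 : Λ (a ^ 2) = 0) : Λ (a * b) = 0 := by
  have hCmul : ∀ (r : ℝ) (p : MvPolynomial (Fin n) ℝ), Λ (C r * p) = r * Λ p := by
    intro r p; rw [← smul_eq_C_mul, map_smul, smul_eq_mul]
  set c := Λ (a * b) with hc
  set d := Λ (b ^ 2) with hd
  have key : ∀ lam : ℝ, 0 ≤ 2 * lam * c + d := by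
    intro lam
    have hdeg : (C lam * a + b).totalDegree ≤ t := by
      refine le_trans (totalDegree_add _ _) (max_le ?_ hb)
      refine le_trans (totalDegree_mul _ _) ?_
      simp [totalDegree_C, ha]
    have hnn := hpos _ hdeg
    have expand : (C lam * a + b) ^ 2
        = C lam * (C lam * a ^ 2) + (C lam * (a * b) + (C lam * (a * b) + b ^ 2)) := by
      ring
    rw [expand] at hnn
    simp only [map_add, hCmul, h0] at hnn
    nlinarith [hnn]
  by_contra hcne
  have h1 := key ((-(d + 1)) / (2 * c))
  have h2 : 2 * ((-(d + 1)) / (2 * c)) * c = -(d + 1) := by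
    field_simp
  rw [h2] at h1
  linarith

/-- Per-generator lemma: an element with a suitably low-degree radical certificate
lies in the kernel of the truncated Hankel operator. -/
lemma gen_mem_kerM {l1 l2 t : ℕ} {c0 : Fin l1 → MvPolynomial (Fin n) ℝ}
    {cp : Fin l2 → MvPolynomial (Fin n) ℝ} {Λ : MvPolynomial (Fin n) ℝ →ₗ[ℝ] ℝ}
    (hΛ : MemL t c0 cp Λ) (s : MvPolynomial (Fin n) ℝ) (m : ℕ) (hm : 1 ≤ m)
    (q : MvPolynomial (Fin n) ℝ) (σs : (Fin l2 → Bool) → MvPolynomial (Fin n) ℝ)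
    (hσ : ∀ ε, IsSOS (σs ε)) (hq : q = ∑ ε, σs ε * prodEps cp ε)
    (h : Fin l1 → MvPolynomial (Fin n) ℝ)
    (hrep : ∑ i, h i * c0 i = s ^ (2 * m) + q)
    (hd1 : ∀ i, (h i * c0 i).totalDegree ≤ t)
    (hd2 : ∀ ε, (σs ε * prodEps cp ε).totalDegree ≤ t)
    (hd3 : m * s.totalDegree ≤ t) : s ∈ kerM t Λ := by
  have hpos : ∀ p : MvPolynomial (Fin n) ℝ, p.totalDegree ≤ t → 0 ≤ Λ (p ^ 2) :=
    fun p hp => sq_nonneg_of_memL hΛ p hp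
  have hdegk : ∀ k, k ≤ m → (s ^ k).totalDegree ≤ t := by
    intro k hk
    refine le_trans (totalDegree_pow s k) (le_trans ?_ hd3)
    exact Nat.mul_le_mul_right _ hk
  have hd1' : ∀ i, (h i * c0 i).totalDegree ≤ 2 * t := fun i => le_trans (hd1 i) (by omega)
  have hd2' : ∀ ε, (σs ε * prodEps cp ε).totalDegree ≤ 2 * t :=
    fun ε => le_trans (hd2 ε) (by omega)
  -- Λ (s^{2m} + q) = 0
  have hA : InTruncPre t c0 cp (s ^ (2 * m) + q) :=
    ⟨h, 0, hd1', fun _ => isSOS_zero, by simp, by rw [← hrep]; simp⟩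
  have hB : InTruncPre t c0 cp (-(s ^ (2 * m) + q)) := by
    refine ⟨fun i => -h i, 0, ?_, fun _ => isSOS_zero, by simp, ?_⟩
    · intro i; rw [neg_mul, totalDegree_neg]; exact hd1' i
    · rw [← hrep]
      simp [neg_mul]
  have hqmem : InTruncPre t c0 cp q :=
    ⟨0, σs, by simp, hσ, hd2', by simp [hq]⟩
  have e1 : Λ (s ^ (2 * m) + q) = 0 := by
    have h1 := hΛ.2 _ hA
    have h2 := hΛ.2 _ hB
    rw [map_neg] at h2
    linarith
  have e2 : s ^ (2 * m) = (s ^ m) ^ 2 := by rw [mul_comm 2 m, pow_mul]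
  have hq0 : 0 ≤ Λ q := hΛ.2 _ hqmem
  have hsm0 : 0 ≤ Λ (s ^ (2 * m)) := by rw [e2]; exact hpos _ (hdegk m le_rfl)
  have e3 : Λ ((s ^ m) ^ 2) = 0 := by
    rw [map_add] at e1
    rw [← e2]; linarith
  -- downward induction on the exponent
  have down : ∀ d k, k + d = m → 1 ≤ k → Λ ((s ^ k) ^ 2) = 0 := by
    intro d
    induction d with
    | zero =>
      intro k hk _
      obtain rfl : k = m := by omega
      exact e3
    | succ d ih =>
      intro k hk hk1
      have IH : Λ ((s ^ (k + 1)) ^ 2) = 0 := ih (k + 1) (by omega) (by omega)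
      have split : (s ^ k) ^ 2 = s ^ (k + 1) * s ^ (k - 1) := by
        rw [← pow_add, ← pow_mul]
        congr 1
        omega
      rw [split]
      exact CS_vanish hpos _ _ (hdegk _ (by omega)) (hdegk _ (by omega)) IH
  have hs1 : Λ ((s ^ 1) ^ 2) = 0 := down (m - 1) 1 (by omega) le_rfl
  have hsdeg : s.totalDegree ≤ t := by
    have := hdegk 1 hm; rwa [pow_one] at this
  refine ⟨hsdeg, fun r hr => ?_⟩
  refine CS_vanish hpos s r hsdeg hr ?_
  rw [pow_one] at hs1; exact hs1

/-- For any set of constraints `C = (C^0; C^+)` there is a `t_0` such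
that for every `t ≥ t_0` and every `Λ ∈ L_t(C)`, the `C^+`-radical `√[C^+]{C^0}` is
contained in the ideal generated by the kernel of the truncated Hankel operator of `Λ`. -/
theorem Cplus_radical_subset_ideal_kernel_hankel
    {l1 l2 : ℕ} (c0 : Fin l1 → MvPolynomial (Fin n) ℝ)
    (cp : Fin l2 → MvPolynomial (Fin n) ℝ) :
    ∃ t0 : ℕ, ∀ t : ℕ, t0 ≤ t →
      ∀ Λ : MvPolynomial (Fin n) ℝ →ₗ[ℝ] ℝ, MemL t c0 cp Λ →
        ∀ p : MvPolynomial (Fin n) ℝ, InCplusRadical c0 cp p →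
          p ∈ Ideal.span (kerM t Λ) := by
  classical
  set J : Set (MvPolynomial (Fin n) ℝ) := {p | InCplusRadical c0 cp p} with hJdef
  -- finitely many generators of the span of J, drawn from J itself
  obtain ⟨T, hT⟩ := IsNoetherian.noetherian (Ideal.span J)
  have hTmem : ∀ g ∈ T, ∃ F : Finset (MvPolynomial (Fin n) ℝ),
      ↑F ⊆ J ∧ g ∈ Submodule.span (MvPolynomial (Fin n) ℝ) (F : Set (MvPolynomial (Fin n) ℝ)) := by
    intro g hg
    have hg' : g ∈ Ideal.span J := hT ▸ Submodule.subset_span hg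
    exact Submodule.mem_span_finite_of_mem_span hg'
  choose F hF1 hF2 using hTmem
  set S : Finset (MvPolynomial (Fin n) ℝ) := T.attach.biUnion (fun g => F g.1 g.2) with hSdef
  have hSJ : (S : Set (MvPolynomial (Fin n) ℝ)) ⊆ J := by
    intro s hs
    simp only [hSdef, Finset.coe_biUnion, Set.mem_iUnion, Finset.mem_coe] at hs
    obtain ⟨g, hg, hsF⟩ := hs
    exact hF1 g.1 g.2 hsF
  have hspan : Ideal.span J ≤ Ideal.span (S : Set (MvPolynomial (Fin n) ℝ)) := by
    rw [← hT]
    refine Submodule.span_le.mpr ?_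
    intro g hg
    refine Submodule.span_mono ?_ (hF2 g hg)
    intro x hx
    simp only [hSdef, Finset.coe_biUnion, Set.mem_iUnion, Finset.mem_coe]
    exact ⟨⟨g, hg⟩, Finset.mem_attach _ _, hx⟩
  -- for each generator, a degree bound past which it is in every kernel
  have hbound : ∀ s ∈ S, ∃ B : ℕ, ∀ t, B ≤ t →
      ∀ Λ : MvPolynomial (Fin n) ℝ →ₗ[ℝ] ℝ, MemL t c0 cp Λ → s ∈ kerM t Λ := by
    intro s hs
    have hrad : InCplusRadical c0 cp s := hSJ hs
    obtain ⟨m, hm, q, ⟨σs, hσ, hq⟩, hmem⟩ := hrad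
    obtain ⟨h, hrep⟩ := Ideal.mem_span_range_iff_exists_fun.mp hmem
    refine ⟨max (m * s.totalDegree)
      (max (Finset.univ.sup fun i => (h i * c0 i).totalDegree)
           (Finset.univ.sup fun ε => (σs ε * prodEps cp ε).totalDegree)), ?_⟩
    intro t ht Λ hΛ
    have ht1 : m * s.totalDegree ≤ t := le_trans (le_max_left _ _) ht
    have ht2 : (Finset.univ.sup fun i => (h i * c0 i).totalDegree) ≤ t :=
      le_trans (le_trans (le_max_left _ _) (le_max_right _ _)) ht
    have ht3 : (Finset.univ.sup fun ε => (σs ε * prodEps cp ε).totalDegree) ≤ t :=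
      le_trans (le_trans (le_max_right _ _) (le_max_right _ _)) ht
    refine gen_mem_kerM hΛ s m hm q σs hσ hq h hrep ?_ ?_ ht1
    · intro i
      exact le_trans (Finset.le_sup (f := fun i => (h i * c0 i).totalDegree) (Finset.mem_univ i)) ht2
    · intro ε
      exact le_trans (Finset.le_sup (f := fun ε => (σs ε * prodEps cp ε).totalDegree) (Finset.mem_univ ε)) ht3
  choose B hB using hbound
  refine ⟨S.attach.sup (fun s => B s.1 s.2), ?_⟩
  intro t ht Λ hΛ p hp
  have hker : ∀ s ∈ S, s ∈ kerM t Λ := by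
    intro s hs
    refine hB s hs t ?_ Λ hΛ
    exact le_trans (Finset.le_sup (f := fun s => B s.1 s.2) (Finset.mem_attach S ⟨s, hs⟩)) ht
  have hpJ : p ∈ Ideal.span J := Ideal.subset_span hp
  have hpS : p ∈ Ideal.span (S : Set (MvPolynomial (Fin n) ℝ)) := hspan hpJ
  refine Ideal.span_le.mpr ?_ hpS
  intro s hs
  exact Ideal.subset_span (hker s hs)

end
end
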